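/- Any minimizer (w̃*, φ*) of the feature reconstruction loss L_FRR(w̃, φ) = E[‖⟨w̃, x̃⟩·φ − x̃‖∞²] over the replicated distribution, subject to y·⟨w̃, x̃⟩ ≥ 0 on the support, satisfies w̃₁* + ... + w̃_d* = w̃*_{d+1}. -/

import Mathlib

open MeasureTheory

/-- The law of the label y: uniform on {-1, +1}. -/
noncomputable def labelMeasure : Measure ℝ :=
  (1 / 2 : ENNReal) • Measure.dirac (-1 : ℝ) + (1 / 2 : ENNReal) • Measure.dirac (1 : ℝ)

/-- The law of the noise: uniform on [-1/2, 1/2]. -/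
noncomputable def noiseMeasure : Measure ℝ :=
  volume.restrict (Set.Icc (-(1:ℝ)/2) (1/2))

/-- The joint law of (y, n₁, n₂). -/
noncomputable def jointMeasure : Measure (ℝ × ℝ × ℝ) :=
  labelMeasure.prod (noiseMeasure.prod noiseMeasure)

/-- The replicated feature vector x̃ = (y+n₁, …, y+n₁, y+n₂) ∈ ℝ^{d+1}. -/
def xt (d : ℕ) (p : ℝ × ℝ × ℝ) : Fin (d + 1) → ℝ :=
  fun i => if (i : ℕ) < d then p.1 + p.2.1 else p.1 + p.2.2

/-- The feature reconstruction loss L_FRR(w̃, φ) = E[‖⟨w̃,x̃⟩·φ − x̃‖∞²], where the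
    norm on `Fin (d+1) → ℝ` is the sup norm. -/
noncomputable def LFRR (d : ℕ) (w φ : Fin (d + 1) → ℝ) : ℝ :=
  ∫ p, ‖(∑ i, w i * xt d p i) • φ - xt d p‖ ^ 2 ∂jointMeasure

/-- The margin-sign constraint y·⟨w̃, x̃⟩ ≥ 0 on the support of the replicated
    distribution. -/
def SignConstraint (d : ℕ) (w : Fin (d + 1) → ℝ) : Prop :=
  ∀ (y n₁ n₂ : ℝ), (y = 1 ∨ y = -1) →
    n₁ ∈ Set.Icc (-(1:ℝ)/2) (1/2) → n₂ ∈ Set.Icc (-(1:ℝ)/2) (1/2) →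
    y * (∑ i, w i * xt d (y, n₁, n₂) i) ≥ 0



instance : SFinite noiseMeasure := by unfold noiseMeasure; infer_instance
instance : SFinite labelMeasure := by unfold labelMeasure; infer_instance

lemma my_smul_prod {α β : Type*} [MeasurableSpace α] [MeasurableSpace β]
    (c : ENNReal) (μ : Measure α) (ν : Measure β) [SFinite μ] [SFinite ν] :
    (c • μ).prod ν = c • (μ.prod ν) := by
  ext s hs
  rw [Measure.prod_apply hs, Measure.smul_apply, Measure.prod_apply hs,
    lintegral_smul_measure, smul_eq_mul]

lemma noise2_eq : noiseMeasure.prod noiseMeasure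
    = volume.restrict ((Set.Icc (-(1:ℝ)/2) (1/2)) ×ˢ (Set.Icc (-(1:ℝ)/2) (1/2))) := by
  simp only [noiseMeasure]
  rw [Measure.prod_restrict, ← Measure.volume_eq_prod]

lemma integrable_noise2 (g : ℝ × ℝ → ℝ) (hg : Continuous g) :
    Integrable g (noiseMeasure.prod noiseMeasure) := by
  rw [noise2_eq]
  exact hg.continuousOn.integrableOn_compact (isCompact_Icc.prod isCompact_Icc)

lemma joint_eq : jointMeasure
    = (1/2 : ENNReal) • (noiseMeasure.prod noiseMeasure).map (Prod.mk (-1 : ℝ))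
      + (1/2 : ENNReal) • (noiseMeasure.prod noiseMeasure).map (Prod.mk (1 : ℝ)) := by
  simp only [jointMeasure, labelMeasure]
  rw [Measure.add_prod, my_smul_prod, my_smul_prod, Measure.dirac_prod, Measure.dirac_prod]

lemma integrable_joint (f : ℝ × ℝ × ℝ → ℝ) (hf : Continuous f) :
    Integrable f jointMeasure := by
  rw [joint_eq]
  have h : ∀ y : ℝ, Integrable f ((noiseMeasure.prod noiseMeasure).map (Prod.mk y)) := by
    intro y
    rw [(measurableEmbedding_prodMk_left y).integrable_map_iff]
    exact integrable_noise2 _ (hf.comp (Continuous.prodMk_right y))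
  exact ((h (-1)).smul_measure (by norm_num)).add_measure ((h 1).smul_measure (by norm_num))

lemma joint_eval (f : ℝ × ℝ × ℝ → ℝ) (hf : Continuous f) :
    ∫ p, f p ∂jointMeasure
      = 1/2 * ((∫ q, f (-1, q) ∂(noiseMeasure.prod noiseMeasure))
          + (∫ q, f (1, q) ∂(noiseMeasure.prod noiseMeasure))) := by
  have h : ∀ y : ℝ, Integrable f ((noiseMeasure.prod noiseMeasure).map (Prod.mk y)) := by
    intro y
    rw [(measurableEmbedding_prodMk_left y).integrable_map_iff]
    exact integrable_noise2 _ (hf.comp (Continuous.prodMk_right y))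
  rw [joint_eq, integral_add_measure ((h (-1)).smul_measure (by norm_num))
      ((h 1).smul_measure (by norm_num)), integral_smul_measure, integral_smul_measure,
    integral_map measurable_prodMk_left.aemeasurable hf.aestronglyMeasurable,
    integral_map measurable_prodMk_left.aemeasurable hf.aestronglyMeasurable]
  have h2 : ((1:ENNReal)/2).toReal = 1/2 := by norm_num
  rw [h2, smul_eq_mul, smul_eq_mul]; ring

lemma noise2_eval (g : ℝ × ℝ → ℝ) (hg : Continuous g) :
    ∫ q, g q ∂(noiseMeasure.prod noiseMeasure)
      = ∫ x in Set.Icc (-(1:ℝ)/2) (1/2), ∫ y in Set.Icc (-(1:ℝ)/2) (1/2), g (x, y) := by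
  have := integral_prod g (integrable_noise2 g hg)
  simpa only [noiseMeasure] using this

lemma quad_int (a b c : ℝ) :
    ∫ x in Set.Icc (-(1:ℝ)/2) (1/2), (a + b*x + c*x^2) = a + c/12 := by
  rw [integral_Icc_eq_integral_Ioc,
    ← intervalIntegral.integral_of_le (by norm_num : -(1:ℝ)/2 ≤ 1/2)]
  have hF : ∀ x ∈ Set.uIcc (-(1:ℝ)/2) (1/2),
      HasDerivAt (fun x => a*x + b/2*x^2 + c/3*x^3) (a + b*x + c*x^2) x := by
    intro x _
    have h1 : HasDerivAt (fun x : ℝ => a*x) (a*1) x := (hasDerivAt_id x).const_mul a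
    have h2 : HasDerivAt (fun x : ℝ => b/2*x^2) (b/2*(2*x^1)) x :=
      (hasDerivAt_pow 2 x).const_mul (b/2)
    have h3 : HasDerivAt (fun x : ℝ => c/3*x^3) (c/3*(3*x^2)) x :=
      (hasDerivAt_pow 3 x).const_mul (c/3)
    have := (h1.add h2).add h3
    exact this.congr_deriv (by ring)
  rw [intervalIntegral.integral_eq_sub_of_hasDerivAt hF
    ((by fun_prop : Continuous fun x : ℝ => a + b*x + c*x^2).intervalIntegrable _ _)]
  ring

lemma joint_eval3 (f : ℝ → ℝ → ℝ → ℝ) (hf : Continuous fun p : ℝ × ℝ × ℝ => f p.1 p.2.1 p.2.2) :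
    ∫ p, f p.1 p.2.1 p.2.2 ∂jointMeasure
      = 1/2 * ((∫ x in Set.Icc (-(1:ℝ)/2) (1/2), ∫ z in Set.Icc (-(1:ℝ)/2) (1/2), f (-1) x z)
        + (∫ x in Set.Icc (-(1:ℝ)/2) (1/2), ∫ z in Set.Icc (-(1:ℝ)/2) (1/2), f 1 x z)) := by
  rw [joint_eval _ hf]
  rw [show (∫ q, (fun p : ℝ × ℝ × ℝ => f p.1 p.2.1 p.2.2) (-1, q) ∂(noiseMeasure.prod noiseMeasure))
      = ∫ q : ℝ × ℝ, f (-1) q.1 q.2 ∂(noiseMeasure.prod noiseMeasure) from rfl]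
  rw [show (∫ q, (fun p : ℝ × ℝ × ℝ => f p.1 p.2.1 p.2.2) (1, q) ∂(noiseMeasure.prod noiseMeasure))
      = ∫ q : ℝ × ℝ, f 1 q.1 q.2 ∂(noiseMeasure.prod noiseMeasure) from rfl]
  rw [noise2_eval _ (by fun_prop), noise2_eval _ (by fun_prop)]

lemma up_val : (∫ p : ℝ × ℝ × ℝ, ((p.2.1 - p.2.2)^2/4) ∂jointMeasure) = 1/24 := by
  rw [joint_eval3 (fun y x z => (x - z)^2/4) (by fun_prop)]
  have hin : ∀ n1 : ℝ, (∫ z in Set.Icc (-(1:ℝ)/2) (1/2), ((n1 - z)^2/4)) = n1^2/4 + 1/48 := by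
    intro n1
    have h : (∫ z in Set.Icc (-(1:ℝ)/2) (1/2), ((n1 - z)^2/4))
        = ∫ z in Set.Icc (-(1:ℝ)/2) (1/2), (n1^2/4 + (-(n1/2))*z + (1/4)*z^2) :=
      integral_congr_ae (ae_of_all _ (fun z => by ring))
    rw [h, quad_int]; ring
  have hout : ∀ y : ℝ, (∫ x in Set.Icc (-(1:ℝ)/2) (1/2),
      ∫ z in Set.Icc (-(1:ℝ)/2) (1/2), ((fun y x z => (x - z)^2/4) y x z : ℝ)) = 1/24 := by
    intro y
    have h : (∫ x in Set.Icc (-(1:ℝ)/2) (1/2),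
        ∫ z in Set.Icc (-(1:ℝ)/2) (1/2), ((x - z)^2/4 : ℝ))
        = ∫ x in Set.Icc (-(1:ℝ)/2) (1/2), ((1/48 : ℝ) + 0*x + (1/4)*x^2) :=
      integral_congr_ae (ae_of_all _ (fun x => by dsimp only; rw [hin x]; ring))
    rw [h, quad_int]; ring
  rw [hout (-1)]; norm_num

lemma low_val (s t c e : ℝ) :
    (∫ p : ℝ × ℝ × ℝ, ((((s*(p.1+p.2.1)+t*(p.1+p.2.2))*c - (p.2.1-p.2.2))^2
        + ((s*(p.1+p.2.1)+t*(p.1+p.2.2))*e - ((p.1+p.2.1)+(p.1+p.2.2)))^2)/4) ∂jointMeasure)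
      = (13/12) + (-25/24)*t*e + (1/24)*t*c + (13/48)*t^2*e^2 + (13/48)*t^2*c^2 + (-25/24)*s*e + (-1/24)*s*c + (1/2)*s*t*e^2 + (1/2)*s*t*c^2 + (13/48)*s^2*e^2 + (13/48)*s^2*c^2 := by
  rw [joint_eval3 (fun y n1 z => (((s*(y+n1)+t*(y+z))*c - (n1-z))^2
      + ((s*(y+n1)+t*(y+z))*e - ((y+n1)+(y+z)))^2)/4) (by fun_prop)]
  have hin : ∀ y n1 : ℝ, (∫ z in Set.Icc (-(1:ℝ)/2) (1/2), ((((s*(y+n1)+t*(y+z))*c - (n1-z))^2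
      + ((s*(y+n1)+t*(y+z))*e - ((y+n1)+(y+z)))^2)/4))
      = ((1/24) + (-1/24)*t*e + (1/24)*t*c + (1/48)*t^2*e^2 + (1/48)*t^2*c^2 + (1)*y^2 + (-1)*y^2*t*e + (1/4)*y^2*t^2*e^2 + (1/4)*y^2*t^2*c^2 + (-1)*y^2*s*e + (1/2)*y^2*s*t*e^2 + (1/2)*y^2*s*t*c^2 + (1/4)*y^2*s^2*e^2 + (1/4)*y^2*s^2*c^2) + ((1)*y + (-1/2)*y*t*e + (-1/2)*y*t*c + (-3/2)*y*s*e + (-1/2)*y*s*c + (1/2)*y*s*t*e^2 + (1/2)*y*s*t*c^2 + (1/2)*y*s^2*e^2 + (1/2)*y*s^2*c^2)*n1 + ((1/2) + (-1/2)*s*e + (-1/2)*s*c + (1/4)*s^2*e^2 + (1/4)*s^2*c^2)*n1^2 := by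
    intro y n1
    have h : (∫ z in Set.Icc (-(1:ℝ)/2) (1/2), ((((s*(y+n1)+t*(y+z))*c - (n1-z))^2
        + ((s*(y+n1)+t*(y+z))*e - ((y+n1)+(y+z)))^2)/4))
        = ∫ z in Set.Icc (-(1:ℝ)/2) (1/2), (((1/2)*n1^2 + (-1/2)*n1^2*s*e + (-1/2)*n1^2*s*c + (1/4)*n1^2*s^2*e^2 + (1/4)*n1^2*s^2*c^2 + (1)*y*n1 + (-1/2)*y*n1*t*e + (-1/2)*y*n1*t*c + (-3/2)*y*n1*s*e + (-1/2)*y*n1*s*c + (1/2)*y*n1*s*t*e^2 + (1/2)*y*n1*s*t*c^2 + (1/2)*y*n1*s^2*e^2 + (1/2)*y*n1*s^2*c^2 + (1)*y^2 + (-1)*y^2*t*e + (1/4)*y^2*t^2*e^2 + (1/4)*y^2*t^2*c^2 + (-1)*y^2*s*e + (1/2)*y^2*s*t*e^2 + (1/2)*y^2*s*t*c^2 + (1/4)*y^2*s^2*e^2 + (1/4)*y^2*s^2*c^2) + ((-1/2)*n1*t*e + (-1/2)*n1*t*c + (-1/2)*n1*s*e + (1/2)*n1*s*c + (1/2)*n1*s*t*e^2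 + (1/2)*n1*s*t*c^2 + (1)*y + (-3/2)*y*t*e + (1/2)*y*t*c + (1/2)*y*t^2*e^2 + (1/2)*y*t^2*c^2 + (-1/2)*y*s*e + (1/2)*y*s*c + (1/2)*y*s*t*e^2 + (1/2)*y*s*t*c^2)*z + ((1/2) + (-1/2)*t*e + (1/2)*t*c + (1/4)*t^2*e^2 + (1/4)*t^2*c^2)*z^2) :=
      integral_congr_ae (ae_of_all _ (fun z => by dsimp only; ring))
    rw [h, quad_int]; ring
  have hout : ∀ y : ℝ, (∫ n1 in Set.Icc (-(1:ℝ)/2) (1/2), ∫ z in Set.Icc (-(1:ℝ)/2) (1/2),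
      ((fun y n1 z => (((s*(y+n1)+t*(y+z))*c - (n1-z))^2
      + ((s*(y+n1)+t*(y+z))*e - ((y+n1)+(y+z)))^2)/4) y n1 z : ℝ))
      = (1/12) + (-1/24)*t*e + (1/24)*t*c + (1/48)*t^2*e^2 + (1/48)*t^2*c^2 + (-1/24)*s*e + (-1/24)*s*c + (1/48)*s^2*e^2 + (1/48)*s^2*c^2 + (1)*y^2 + (-1)*y^2*t*e + (1/4)*y^2*t^2*e^2 + (1/4)*y^2*t^2*c^2 + (-1)*y^2*s*e + (1/2)*y^2*s*t*e^2 + (1/2)*y^2*s*t*c^2 + (1/4)*y^2*s^2*e^2 + (1/4)*y^2*s^2*c^2 := by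
    intro y
    have h : (∫ n1 in Set.Icc (-(1:ℝ)/2) (1/2), ∫ z in Set.Icc (-(1:ℝ)/2) (1/2),
        ((((s*(y+n1)+t*(y+z))*c - (n1-z))^2
        + ((s*(y+n1)+t*(y+z))*e - ((y+n1)+(y+z)))^2)/4 : ℝ))
        = ∫ n1 in Set.Icc (-(1:ℝ)/2) (1/2), (((1/24) + (-1/24)*t*e + (1/24)*t*c + (1/48)*t^2*e^2 + (1/48)*t^2*c^2 + (1)*y^2 + (-1)*y^2*t*e + (1/4)*y^2*t^2*e^2 + (1/4)*y^2*t^2*c^2 + (-1)*y^2*s*e + (1/2)*y^2*s*t*e^2 + (1/2)*y^2*s*t*c^2 + (1/4)*y^2*s^2*e^2 + (1/4)*y^2*s^2*c^2) + ((1)*y + (-1/2)*y*t*e + (-1/2)*y*t*c + (-3/2)*y*s*e + (-1/2)*y*s*c + (1/2)*y*s*t*e^2 + (1/2)*y*s*t*c^2 + (1/2)*y*s^2*e^2 + (1/2)*y*s^2*c^2)*n1 + ((1/2) + (-1/2)*s*e + (-1/2)*s*c + (1/4)*s^2*e^2 + (1/4)*s^2*c^2)*n1^2) :=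
      integral_congr_ae (ae_of_all _ (fun n1 => by dsimp only; rw [hin y n1]))
    rw [h, quad_int]; ring
  rw [hout (-1), hout 1]; ring



lemma sum_w (d : ℕ) (w : Fin (d+1) → ℝ) (p : ℝ × ℝ × ℝ) :
    ∑ i, w i * xt d p i
      = (∑ i ∈ Finset.univ.filter (fun i : Fin (d + 1) => (i : ℕ) < d), w i) * (p.1 + p.2.1)
        + w (Fin.last d) * (p.1 + p.2.2) := by
  rw [← Finset.sum_filter_add_sum_filter_not Finset.univ (fun i : Fin (d+1) => (i : ℕ) < d)
    (fun i => w i * xt d p i)]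
  congr 1
  · rw [Finset.sum_mul]
    refine Finset.sum_congr rfl fun i hi => ?_
    simp only [Finset.mem_filter] at hi
    simp [xt, hi.2]
  · have h : Finset.univ.filter (fun i : Fin (d+1) => ¬ (i : ℕ) < d) = {Fin.last d} := by
      ext i
      have := i.isLt
      simp only [Finset.mem_filter, Finset.mem_univ, true_and, Finset.mem_singleton,
        Fin.ext_iff, Fin.val_last]
      omega
    rw [h, Finset.sum_singleton]
    simp [xt]

noncomputable def w0 (d : ℕ) : Fin (d+1) → ℝ :=
  fun i => (if i = (0 : Fin (d+1)) then 1 else 0) + (if i = Fin.last d then 1 else 0)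

lemma w0_sum (d : ℕ) (hd : 1 ≤ d) :
    (∑ i ∈ Finset.univ.filter (fun i : Fin (d + 1) => (i : ℕ) < d), w0 d i) = 1 := by
  simp only [w0, Finset.sum_add_distrib]
  rw [Finset.sum_ite_eq' _ (0 : Fin (d+1)) (fun _ => (1:ℝ)),
    Finset.sum_ite_eq' _ (Fin.last d) (fun _ => (1:ℝ))]
  have h0 : (0 : Fin (d+1)) ∈ Finset.univ.filter (fun i : Fin (d + 1) => (i : ℕ) < d) := by
    simp
    omega
  have h1 : Fin.last d ∉ Finset.univ.filter (fun i : Fin (d + 1) => (i : ℕ) < d) := by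
    simp
  rw [if_pos h0, if_neg h1]; ring

lemma w0_last (d : ℕ) (hd : 1 ≤ d) : w0 d (Fin.last d) = 1 := by
  have h : Fin.last d ≠ (0 : Fin (d+1)) := by
    simp [Fin.ext_iff]
    omega
  simp [w0, h]

noncomputable def ph0 (d : ℕ) : Fin (d+1) → ℝ := fun _ => 1/2

lemma w0_sign (d : ℕ) (hd : 1 ≤ d) : SignConstraint d (w0 d) := by
  intro y n1 n2 hy h1 h2
  rw [sum_w, w0_sum d hd, w0_last d hd]
  obtain ⟨ha1, hb1⟩ := h1
  obtain ⟨ha2, hb2⟩ := h2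
  rcases hy with rfl | rfl
  · simp only [ge_iff_le]
    nlinarith
  · simp only [ge_iff_le]
    nlinarith

lemma cont_xt (d : ℕ) : Continuous fun p : ℝ × ℝ × ℝ => xt d p := by
  refine continuous_pi fun i => ?_
  unfold xt
  by_cases hi : (i : ℕ) < d
  · simp only [if_pos hi]; fun_prop
  · simp only [if_neg hi]; fun_prop

lemma cont_lfrr (d : ℕ) (w φ : Fin (d+1) → ℝ) :
    Continuous fun p : ℝ × ℝ × ℝ => ‖(∑ i, w i * xt d p i) • φ - xt d p‖ ^ 2 := by
  have hz : Continuous fun p : ℝ × ℝ × ℝ => ∑ i, w i * xt d p i :=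
    continuous_finset_sum _ fun i _ => continuous_const.mul ((continuous_apply i).comp (cont_xt d))
  exact ((hz.smul continuous_const).sub (cont_xt d)).norm.pow 2

lemma up_eq (d : ℕ) (hd : 1 ≤ d) : LFRR d (w0 d) (ph0 d) = 1/24 := by
  have key : ∀ p : ℝ × ℝ × ℝ,
      ‖(∑ i, w0 d i * xt d p i) • ph0 d - xt d p‖ ^ 2 = (p.2.1 - p.2.2)^2/4 := by
    intro p
    have hz : (∑ i, w0 d i * xt d p i) = (p.1 + p.2.1) + (p.1 + p.2.2) := by
      rw [sum_w, w0_sum d hd, w0_last d hd]; ring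
    set v := (∑ i, w0 d i * xt d p i) • ph0 d - xt d p with hvdef
    have hv : ∀ i, ‖v i‖ = |p.2.1 - p.2.2| / 2 := by
      intro i
      by_cases hi : (i : ℕ) < d
      · simp only [hvdef, Pi.sub_apply, Pi.smul_apply, smul_eq_mul, ph0, Real.norm_eq_abs]
        rw [hz]
        simp only [xt, if_pos hi]
        rw [show ((p.1+p.2.1)+(p.1+p.2.2))*(1/2) - (p.1+p.2.1) = (p.2.2-p.2.1)/2 by ring,
          abs_div, abs_sub_comm]
        norm_num
      · simp only [hvdef, Pi.sub_apply, Pi.smul_apply, smul_eq_mul, ph0, Real.norm_eq_abs]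
        rw [hz]
        simp only [xt, if_neg hi]
        rw [show ((p.1+p.2.1)+(p.1+p.2.2))*(1/2) - (p.1+p.2.2) = (p.2.1-p.2.2)/2 by ring,
          abs_div]
        norm_num
    have hnv : ‖v‖ = |p.2.1 - p.2.2| / 2 := by
      refine le_antisymm ((pi_norm_le_iff_of_nonneg (by positivity)).2 fun i => (hv i).le) ?_
      calc |p.2.1 - p.2.2| / 2 = ‖v ⟨0, Nat.succ_pos d⟩‖ := (hv _).symm
        _ ≤ ‖v‖ := norm_le_pi_norm v _
    rw [hnv, div_pow, sq_abs]
    norm_num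
  show (∫ p, ‖(∑ i, w0 d i * xt d p i) • ph0 d - xt d p‖ ^ 2 ∂jointMeasure) = 1/24
  rw [integral_congr_ae (ae_of_all _ key)]
  exact up_val

lemma pointwise_low (d : ℕ) (hd : 1 ≤ d) (w φ : Fin (d+1) → ℝ) (s t c e : ℝ)
    (hs : s = ∑ i ∈ Finset.univ.filter (fun i : Fin (d + 1) => (i : ℕ) < d), w i)
    (ht : t = w (Fin.last d))
    (hc : c = φ ⟨0, Nat.succ_pos d⟩ - φ (Fin.last d))
    (he : e = φ ⟨0, Nat.succ_pos d⟩ + φ (Fin.last d))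
    (p : ℝ × ℝ × ℝ) :
    (((s*(p.1+p.2.1)+t*(p.1+p.2.2))*c - (p.2.1-p.2.2))^2
      + ((s*(p.1+p.2.1)+t*(p.1+p.2.2))*e - ((p.1+p.2.1)+(p.1+p.2.2)))^2)/4
    ≤ ‖(∑ i, w i * xt d p i) • φ - xt d p‖ ^ 2 := by
  set z := ∑ i, w i * xt d p i with hzdef
  set v := z • φ - xt d p with hvdef
  have hzz : s*(p.1+p.2.1)+t*(p.1+p.2.2) = z := by
    rw [hzdef, sum_w, hs, ht]
  have hi0 : ((⟨0, Nat.succ_pos d⟩ : Fin (d+1)) : ℕ) < d := hd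
  have hv0 : v ⟨0, Nat.succ_pos d⟩ = z * φ ⟨0, Nat.succ_pos d⟩ - (p.1+p.2.1) := by
    simp [hvdef, xt, hi0]
  have hvL : v (Fin.last d) = z * φ (Fin.last d) - (p.1+p.2.2) := by
    simp [hvdef, xt]
  have h0 : |v ⟨0, Nat.succ_pos d⟩| ≤ ‖v‖ := by
    rw [← Real.norm_eq_abs]; exact norm_le_pi_norm v _
  have hL : |v (Fin.last d)| ≤ ‖v‖ := by
    rw [← Real.norm_eq_abs]; exact norm_le_pi_norm v _
  have h0' : (v ⟨0, Nat.succ_pos d⟩)^2 ≤ ‖v‖^2 := by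
    rw [← sq_abs]; exact pow_le_pow_left₀ (abs_nonneg _) h0 2
  have hL' : (v (Fin.last d))^2 ≤ ‖v‖^2 := by
    rw [← sq_abs]; exact pow_le_pow_left₀ (abs_nonneg _) hL 2
  have e1 : (s*(p.1+p.2.1)+t*(p.1+p.2.2))*c - (p.2.1-p.2.2)
      = v ⟨0, Nat.succ_pos d⟩ - v (Fin.last d) := by
    rw [hzz, hv0, hvL, hc]; ring
  have e2 : (s*(p.1+p.2.1)+t*(p.1+p.2.2))*e - ((p.1+p.2.1)+(p.1+p.2.2))
      = v ⟨0, Nat.succ_pos d⟩ + v (Fin.last d) := by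
    rw [hzz, hv0, hvL, he]; ring
  rw [e1, e2]
  nlinarith [h0', hL']


lemma alg_key (s t c e : ℝ)
    (h : (13/12) + (-25/24)*t*e + (1/24)*t*c + (13/48)*t^2*e^2 + (13/48)*t^2*c^2
      + (-25/24)*s*e + (-1/24)*s*c + (1/2)*s*t*e^2 + (1/2)*s*t*c^2 + (13/48)*s^2*e^2
      + (13/48)*s^2*c^2 ≤ 1/24) : s = t := by
  have hA : (0:ℝ) ≤ 13/12*(s^2+t^2) + 2*s*t := by
    nlinarith [sq_nonneg (s+t), sq_nonneg (s-t)]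
  have hK : 25/6 ≤ 2*c*((s-t)/12) + 2*e*(25*(s+t)/12)
      - (c^2+e^2)*(13/12*(s^2+t^2) + 2*s*t) := by linarith [h]
  have hprod : (0:ℝ) ≤ (13/12*(s^2+t^2) + 2*s*t) * ((2*c*((s-t)/12) + 2*e*(25*(s+t)/12)
      - (c^2+e^2)*(13/12*(s^2+t^2) + 2*s*t)) - 25/6) :=
    mul_nonneg hA (by linarith)
  have hid : (13/12*(s^2+t^2) + 2*s*t) * ((2*c*((s-t)/12) + 2*e*(25*(s+t)/12)
      - (c^2+e^2)*(13/12*(s^2+t^2) + 2*s*t)) - 25/6)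
      + (c*(13/12*(s^2+t^2) + 2*s*t) - (s-t)/12)^2
      + (e*(13/12*(s^2+t^2) + 2*s*t) - 25*(s+t)/12)^2 = -((s-t)^2/6) := by ring
  have hsq : (s-t)^2 ≤ 0 := by
    linarith [hprod, hid, sq_nonneg (c*(13/12*(s^2+t^2) + 2*s*t) - (s-t)/12),
      sq_nonneg (e*(13/12*(s^2+t^2) + 2*s*t) - 25*(s+t)/12)]
  have hst : s - t = 0 := by
    have h2 := sq_nonneg (s-t)
    have h3 : (s-t)^2 = 0 := le_antisymm hsq h2
    exact pow_eq_zero_iff (n := 2) (by norm_num) |>.mp h3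
  linarith

/-- Any minimizer (w̃*, φ*) of L_FRR subject to the sign constraint satisfies
    w̃₁* + ⋯ + w̃_d* = w̃*_{d+1}. -/
theorem frr_minimizer_balanced (d : ℕ) (hd : 1 ≤ d)
    (w' φ' : Fin (d + 1) → ℝ)
    (hcon : SignConstraint d w')
    (hmin : ∀ (w φ : Fin (d + 1) → ℝ), SignConstraint d w →
      LFRR d w' φ' ≤ LFRR d w φ) :
    (∑ i ∈ Finset.univ.filter (fun i : Fin (d + 1) => (i : ℕ) < d), w' i) =
      w' (Fin.last d) := by
  have hup : LFRR d w' φ' ≤ 1/24 := by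
    have h := hmin (w0 d) (ph0 d) (w0_sign d hd)
    rwa [up_eq d hd] at h
  refine alg_key _ (w' (Fin.last d)) (φ' ⟨0, Nat.succ_pos d⟩ - φ' (Fin.last d))
    (φ' ⟨0, Nat.succ_pos d⟩ + φ' (Fin.last d)) (le_trans ?_ hup)
  rw [← low_val]
  exact integral_mono_of_nonneg (ae_of_all _ fun p => by positivity)
    (integrable_joint _ (cont_lfrr d w' φ'))
    (ae_of_all _ fun p => pointwise_low d hd w' φ' _ _ _ _ rfl rfl rfl rfl p)
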